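/- For every positive integer m, there is at most one integer i ≥ 1 such that m ≡ a_i (mod 3^i). -/
import Mathlib


/-- The auxiliary sequence: `a 1 = 3`, `a i = 3 * a (i-1) - 1` for `i ≥ 2`. -/
def a : ℕ → ℕ
  | 0 => 0
  | 1 => 3
  | n + 2 => 3 * a (n + 1) - 1

/-- `R(m, i) = max(0, ⌊(m − a i − 1)/3^i⌋)` (truncated ℕ-subtraction gives the max). -/
def Rmi (m i : ℕ) : ℕ := (m - a i - 1) / 3 ^ i

/-- `R(m) = ∑_{i=1}^∞ R(m, i)`; all terms with `i > m` vanish, so a finite sum suffices. -/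
def R (m : ℕ) : ℕ := ∑ i ∈ Finset.Icc 1 m, Rmi m i

/-- `m` has a witness pair `(k, i)` of positive integers with `m = k·3^i + a i`. -/
def HasWitness (m : ℕ) : Prop := ∃ k i : ℕ, 1 ≤ k ∧ 1 ≤ i ∧ m = k * 3 ^ i + a i

/-- `B` is the `B`-sequence: `B 0 = 0`, `B n = n` for `1 ≤ n ≤ 5`, and
`B n = B (n - B (n-1)) + B (n - B (n-2)) + B (n - B (n-3))` for `n ≥ 6`. -/
def IsBSeq (B : ℕ → ℕ) : Prop :=
  B 0 = 0 ∧ (∀ n, 1 ≤ n → n ≤ 5 → B n = n) ∧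
    ∀ n, 6 ≤ n → B n = B (n - B (n - 1)) + B (n - B (n - 2)) + B (n - B (n - 3))

/-- for every positive integer `m`, there is at most one `i ≥ 1`
with `m ≡ a i (mod 3^i)`. -/

lemma a_closed : ∀ n : ℕ, 2 * a (n + 1) = 5 * 3 ^ n + 1 := by
  intro n
  induction n with
  | zero => simp [a]
  | succ k ih =>
    have h1 : 1 ≤ a (k + 1) := by nlinarith [Nat.one_le_two_pow (n := k), pow_pos (by norm_num : (0:ℕ) < 3) k]
    show 2 * (3 * a (k + 1) - 1) = 5 * 3 ^ (k + 1) + 1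
    have : 3 ^ (k + 1) = 3 * 3 ^ k := pow_succ' 3 k
    omega

lemma a_ne_mod (i j : ℕ) (hi : 1 ≤ i) (hij : i < j) : ¬ a i ≡ a j [MOD 3 ^ i] := by
  intro h
  obtain ⟨i', rfl⟩ : ∃ i', i = i' + 1 := ⟨i - 1, by omega⟩
  obtain ⟨d, rfl⟩ : ∃ d, j = i' + 1 + (d + 1) := ⟨j - i' - 2, by omega⟩
  have h2 := h.mul_left 2
  rw [a_closed, show i' + 1 + (d + 1) = (i' + (d + 1)) + 1 by ring, a_closed] at h2
  have hle : 5 * 3 ^ i' + 1 ≤ 5 * 3 ^ (i' + (d + 1)) + 1 := by gcongr <;> omega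
  have hdvd : 3 ^ (i' + 1) ∣ 5 * 3 ^ (i' + (d + 1)) + 1 - (5 * 3 ^ i' + 1) :=
    (Nat.modEq_iff_dvd' hle).mp h2
  have h4 : 1 ≤ 3 ^ d := Nat.one_le_pow _ _ (by norm_num)
  have heq : 5 * 3 ^ (i' + (d + 1)) + 1 - (5 * 3 ^ i' + 1) = 3 ^ i' * (5 * (3 * 3 ^ d - 1)) := by
    zify [hle, show (1:ℕ) ≤ 3 * 3 ^ d by omega]
    rw [pow_add]
    ring
  rw [heq, pow_succ'] at hdvd
  have hdvd2 : 3 ∣ 5 * (3 * 3 ^ d - 1) := by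
    have hp : (0:ℕ) < 3 ^ i' := pow_pos (by norm_num) _
    rcases hdvd with ⟨c, hc⟩
    exact ⟨c, Nat.eq_of_mul_eq_mul_left hp (hc.trans (by ring))⟩
  omega

theorem stmt_2 (m : ℕ) (hm : 1 ≤ m) :
    {i : ℕ | 1 ≤ i ∧ m ≡ a i [MOD 3 ^ i]}.Subsingleton := by
  intro x hx y hy
  simp only [Set.mem_setOf_eq] at hx hy
  by_contra hne
  rcases Nat.lt_or_ge x y with h | h
  · exact a_ne_mod x y hx.1 h (hx.2.symm.trans (hy.2.of_dvd (pow_dvd_pow 3 h.le)))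
  · have h' : y < x := lt_of_le_of_ne h fun e => hne e.symm
    exact a_ne_mod y x hy.1 h' (hy.2.symm.trans (hx.2.of_dvd (pow_dvd_pow 3 h'.le)))
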